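/- Let N ∈ ℕ, let c_j ∈ ℂ for |j| ≤ N, and define w(x,y) = Σ_{|j|≤N} c_j e^{iμ_j y} φ_j(x). If for some y₀ ∈ ℝ one has ∫₀^L ( \overline{w(x,y₀)} ∂_y w(x,y₀) − w(x,y₀) ∂_y \overline{w(x,y₀)} ) dx = 0, then c_j = 0 for every j ∈ J with |j| ≤ N; that is, all propagating-mode coefficients vanish. -/

import Mathlib

open Complex

private lemma exp_int_ne' (a L : ℝ) (ha : a ≠ 0) :
    ∫ x in (0:ℝ)..L, Complex.exp (Complex.I * a * x) =
      (Complex.exp (Complex.I * a * L) - 1) / (Complex.I * a) := by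
  have hIa : (Complex.I * a) ≠ 0 := by
    simp [Complex.ext_iff, ha]
  have hD : ∀ x ∈ Set.uIcc (0:ℝ) L, HasDerivAt
      (fun t : ℝ => Complex.exp (Complex.I * a * t) / (Complex.I * a))
      (Complex.exp (Complex.I * a * x)) x := by
    intro x _
    have h0 : HasDerivAt (fun t : ℝ => (t : ℂ)) 1 x := by
      simpa using (hasDerivAt_id _).ofReal_comp
    have h1 : HasDerivAt (fun t : ℝ => Complex.exp (Complex.I * a * t) / (Complex.I * a))
        (Complex.exp (Complex.I * a * x) * (Complex.I * a * 1) / (Complex.I * a)) x :=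
      ((h0.const_mul _).cexp).div_const _
    convert h1 using 1
    field_simp
    exact (div_self (Complex.ofReal_ne_zero.mpr ha)).symm
  have hcont : IntervalIntegrable (fun x : ℝ => Complex.exp (Complex.I * a * x))
      MeasureTheory.volume 0 L :=
    (Continuous.cexp (by continuity)).intervalIntegrable _ _
  rw [intervalIntegral.integral_eq_sub_of_hasDerivAt hD hcont]
  rw [show ((0:ℝ):ℂ) = 0 by norm_num, mul_zero, Complex.exp_zero]
  ring

private lemma ortho' (L k θ : ℝ) (hL : 0 < L)
    (lam : ℤ → ℝ) (hlam : ∀ j : ℤ, lam j = k * Real.cos θ + 2 * Real.pi * j / L)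
    (φ : ℤ → ℝ → ℂ)
    (hφ : ∀ (j : ℤ) (x : ℝ), φ j x = Complex.exp (Complex.I * lam j * x) / Real.sqrt L)
    (j l : ℤ) :
    ∫ x in (0:ℝ)..L, (starRingEnd ℂ) (φ j x) * φ l x = if j = l then 1 else 0 := by
  have hsL : (Real.sqrt L : ℂ) * (Real.sqrt L : ℂ) = (L : ℂ) := by
    rw [← Complex.ofReal_mul, Real.mul_self_sqrt hL.le]
  have hLne : (L:ℂ) ≠ 0 := by exact_mod_cast hL.ne'
  have hpt : ∀ x : ℝ, (starRingEnd ℂ) (φ j x) * φ l x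
      = Complex.exp (Complex.I * (lam l - lam j) * x) / L := by
    intro x
    rw [hφ, hφ]
    rw [map_div₀, ← Complex.exp_conj]
    simp only [map_mul, Complex.conj_I, Complex.conj_ofReal]
    rw [div_mul_div_comm, ← Complex.exp_add, hsL]
    congr 1
    ring
  simp_rw [hpt]
  rw [intervalIntegral.integral_div]
  by_cases hjl : j = l
  · subst hjl
    simp [div_self hLne]
  · rw [if_neg hjl]
    have ha : lam l - lam j ≠ 0 := by
      rw [hlam, hlam]
      have : k * Real.cos θ + 2 * Real.pi * l / L - (k * Real.cos θ + 2 * Real.pi * j / L)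
          = 2 * Real.pi * (l - j) / L := by ring
      rw [this]
      have hlj : (l : ℝ) - j ≠ 0 := by
        intro h; apply hjl; have := sub_eq_zero.mp h; exact_mod_cast this.symm
      positivity
    have hint := exp_int_ne' (lam l - lam j) L ha
    rw [show ((lam l : ℂ) - (lam j : ℂ)) = ((lam l - lam j : ℝ) : ℂ) by push_cast; ring, hint]
    have haL : (lam l - lam j) * L = 2 * Real.pi * (l - j) := by
      rw [hlam, hlam]; field_simp; ring
    have haLC : (((lam l - lam j) : ℝ):ℂ) * L = ((l:ℂ) - j) * (2 * (Real.pi:ℂ)) := by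
      have h := congrArg (fun r : ℝ => (r:ℂ)) haL
      push_cast at h ⊢
      linear_combination h
    have h1 : Complex.exp (Complex.I * ((lam l - lam j : ℝ):ℂ) * L) = 1 := by
      rw [show Complex.I * ((lam l - lam j : ℝ):ℂ) * (L:ℂ)
          = ((l - j : ℤ):ℂ) * (2 * (Real.pi:ℂ) * Complex.I) by
        push_cast at haLC ⊢; linear_combination Complex.I * haLC]
      exact Complex.exp_int_mul_two_pi_mul_I _
    rw [h1]
    simp

private lemma diag_id (z E a : ℂ) :
    (starRingEnd ℂ) (z * E) * (z * (a * E)) - (z * E) * (starRingEnd ℂ) (z * (a * E))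
      = (Complex.normSq z : ℂ) * (Complex.normSq E : ℂ) * (a - (starRingEnd ℂ) a) := by
  simp only [map_mul, Complex.normSq_eq_conj_mul_self]
  ring

set_option maxHeartbeats 1000000 in
theorem statement4
    (L k θ : ℝ) (hL : 0 < L) (hk : 0 < k) (hθ : θ ∈ Set.Ioo 0 (Real.pi / 2))
    (lam : ℤ → ℝ) (hlam : ∀ j : ℤ, lam j = k * Real.cos θ + 2 * Real.pi * j / L)
    (hnr : ∀ j : ℤ, (lam j) ^ 2 ≠ k ^ 2)
    (φ : ℤ → ℝ → ℂ)
    (hφ : ∀ (j : ℤ) (x : ℝ), φ j x = Complex.exp (Complex.I * lam j * x) / Real.sqrt L)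
    (μ : ℤ → ℂ)
    (hμ1 : ∀ j : ℤ, (lam j) ^ 2 < k ^ 2 → μ j = (Real.sqrt (k ^ 2 - (lam j) ^ 2) : ℝ))
    (hμ2 : ∀ j : ℤ, k ^ 2 < (lam j) ^ 2 → μ j = Complex.I * (Real.sqrt ((lam j) ^ 2 - k ^ 2) : ℝ))
    (N : ℕ) (c : ℤ → ℂ) (w : ℝ → ℝ → ℂ)
    (hw : ∀ x y : ℝ, w x y =
      ∑ j ∈ Finset.Icc (-(N : ℤ)) (N : ℤ), c j * Complex.exp (Complex.I * μ j * y) * φ j x)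
    (y₀ : ℝ)
    (hflux : (∫ x in (0 : ℝ)..L,
        ((starRingEnd ℂ) (w x y₀) * deriv (fun t => w x t) y₀
          - w x y₀ * (starRingEnd ℂ) (deriv (fun t => w x t) y₀))) = 0) :
    ∀ j ∈ Finset.Icc (-(N : ℤ)) (N : ℤ), (lam j) ^ 2 < k ^ 2 → c j = 0 := by
  set S : Finset ℤ := Finset.Icc (-(N : ℤ)) (N : ℤ) with hS
  -- amplitudes
  set A : ℤ → ℂ := fun j => c j * Complex.exp (Complex.I * μ j * y₀) with hA
  set B : ℤ → ℂ := fun j => c j * (Complex.I * μ j * Complex.exp (Complex.I * μ j * y₀)) with hB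
  -- the y-derivative
  have hderiv : ∀ x : ℝ, deriv (fun t => w x t) y₀ = ∑ j ∈ S, B j * φ j x := by
    intro x
    have hfun : (fun t : ℝ => w x t)
        = fun t : ℝ => ∑ j ∈ S, c j * Complex.exp (Complex.I * μ j * t) * φ j x := by
      funext t; exact hw x t
    have hH : HasDerivAt (fun t : ℝ => w x t) (∑ j ∈ S, B j * φ j x) y₀ := by
      rw [hfun]
      apply HasDerivAt.fun_sum
      intro j _
      have h0 : HasDerivAt (fun t : ℝ => (t : ℂ)) 1 y₀ := by
        simpa using (hasDerivAt_id _).ofReal_comp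
      have h1 : HasDerivAt (fun t : ℝ => c j * Complex.exp (Complex.I * μ j * t) * φ j x)
          (Complex.exp (Complex.I * μ j * y₀) * (Complex.I * μ j * 1) * c j * φ j x) y₀ := by
        simpa [mul_comm, mul_assoc, mul_left_comm] using
          (((h0.const_mul (Complex.I * μ j)).cexp).const_mul (c j)).mul_const (φ j x)
      convert h1 using 1
      · rfl
      simp only [hB]
      ring
    exact hH.deriv
  -- pointwise expansion of the integrand
  have hpt : ∀ x : ℝ,
      (starRingEnd ℂ) (w x y₀) * deriv (fun t => w x t) y₀
        - w x y₀ * (starRingEnd ℂ) (deriv (fun t => w x t) y₀)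
      = ∑ j ∈ S, ∑ l ∈ S,
          ((starRingEnd ℂ) (A j) * B l - A l * (starRingEnd ℂ) (B j))
            * ((starRingEnd ℂ) (φ j x) * φ l x) := by
    intro x
    have hwx : w x y₀ = ∑ j ∈ S, A j * φ j x := hw x y₀
    rw [hwx, hderiv x, map_sum, map_sum, Finset.sum_mul_sum, Finset.sum_mul_sum]
    rw [Finset.sum_comm (s := S) (t := S)
      (f := fun j l => (A j * φ j x) * (starRingEnd ℂ) (B l * φ l x))]
    rw [← Finset.sum_sub_distrib]
    refine Finset.sum_congr rfl fun j _ => ?_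
    rw [← Finset.sum_sub_distrib]
    refine Finset.sum_congr rfl fun l _ => ?_
    simp only [map_mul]
    ring
  -- continuity of φ
  have hφc : ∀ j : ℤ, Continuous (φ j) := by
    intro j
    have : φ j = fun x : ℝ => Complex.exp (Complex.I * lam j * x) / Real.sqrt L := by
      funext x; exact hφ j x
    rw [this]
    exact (Continuous.cexp (continuous_const.mul Complex.continuous_ofReal)).div_const _
  -- compute the flux integral
  have hflux2 : (∑ j ∈ S, ((starRingEnd ℂ) (A j) * B j - A j * (starRingEnd ℂ) (B j))) = 0 := by
    have hcont2 : ∀ j l : ℤ, Continuous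
        (fun x : ℝ => ((starRingEnd ℂ) (A j) * B l - A l * (starRingEnd ℂ) (B j))
          * ((starRingEnd ℂ) (φ j x) * φ l x)) := fun j l =>
      continuous_const.mul ((Complex.continuous_conj.comp (hφc j)).mul (hφc l))
    have hint : ∀ j l : ℤ, IntervalIntegrable
        (fun x : ℝ => ((starRingEnd ℂ) (A j) * B l - A l * (starRingEnd ℂ) (B j))
          * ((starRingEnd ℂ) (φ j x) * φ l x)) MeasureTheory.volume 0 L :=
      fun j l => (hcont2 j l).intervalIntegrable _ _
    have hintj : ∀ j ∈ S, IntervalIntegrable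
        (fun x : ℝ => ∑ l ∈ S, ((starRingEnd ℂ) (A j) * B l - A l * (starRingEnd ℂ) (B j))
          * ((starRingEnd ℂ) (φ j x) * φ l x)) MeasureTheory.volume 0 L :=
      fun j _ => (continuous_finset_sum S fun l _ => hcont2 j l).intervalIntegrable _ _
    calc (∑ j ∈ S, ((starRingEnd ℂ) (A j) * B j - A j * (starRingEnd ℂ) (B j)))
        = ∑ j ∈ S, ∑ l ∈ S, ((starRingEnd ℂ) (A j) * B l - A l * (starRingEnd ℂ) (B j))
            * (if j = l then (1:ℂ) else 0) := by
          refine Finset.sum_congr rfl fun j hj => ?_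
          rw [Finset.sum_eq_single j]
          · simp
          · intro l _ hlj; simp [Ne.symm hlj]
          · intro h; exact absurd hj h
      _ = ∑ j ∈ S, ∑ l ∈ S, ((starRingEnd ℂ) (A j) * B l - A l * (starRingEnd ℂ) (B j))
            * (∫ x in (0:ℝ)..L, (starRingEnd ℂ) (φ j x) * φ l x) := by
          refine Finset.sum_congr rfl fun j _ => Finset.sum_congr rfl fun l _ => ?_
          rw [ortho' L k θ hL lam hlam φ hφ j l]
      _ = ∑ j ∈ S, ∑ l ∈ S, ∫ x in (0:ℝ)..L,
            ((starRingEnd ℂ) (A j) * B l - A l * (starRingEnd ℂ) (B j))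
              * ((starRingEnd ℂ) (φ j x) * φ l x) := by
          refine Finset.sum_congr rfl fun j _ => Finset.sum_congr rfl fun l _ => ?_
          rw [intervalIntegral.integral_const_mul]
      _ = ∫ x in (0:ℝ)..L, ∑ j ∈ S, ∑ l ∈ S,
            ((starRingEnd ℂ) (A j) * B l - A l * (starRingEnd ℂ) (B j))
              * ((starRingEnd ℂ) (φ j x) * φ l x) := by
          rw [intervalIntegral.integral_finset_sum hintj]
          refine Finset.sum_congr rfl fun j hj => ?_
          exact (intervalIntegral.integral_finset_sum fun l _ => hint j l).symm
      _ = 0 := by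
          rw [← hflux]
          refine intervalIntegral.integral_congr fun x _ => ?_
          exact (hpt x).symm
  -- evaluate the diagonal terms
  set t : ℤ → ℝ := fun j => if (lam j)^2 < k^2
      then Real.sqrt (k^2 - (lam j)^2)
        * (Complex.normSq (c j) * Complex.normSq (Complex.exp (Complex.I * μ j * y₀)))
      else 0 with ht
  have hdiag : ∀ j : ℤ, (starRingEnd ℂ) (A j) * B j - A j * (starRingEnd ℂ) (B j)
      = 2 * Complex.I * (t j : ℂ) := by
    intro j
    simp only [hA, hB]
    rw [diag_id]
    rcases lt_or_gt_of_ne (hnr j) with hlt | hgt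
    · simp only [ht, if_pos hlt, hμ1 j hlt]
      simp only [map_mul, Complex.conj_I, Complex.conj_ofReal]
      push_cast
      ring
    · have hne : ¬ (lam j)^2 < k^2 := by linarith
      simp only [ht, if_neg hne, hμ2 j hgt]
      simp only [map_mul, Complex.conj_I, Complex.conj_ofReal]
      push_cast
      ring
  -- conclude
  have hsum0 : ∑ j ∈ S, t j = 0 := by
    have h1 : (2 * Complex.I) * ((∑ j ∈ S, t j : ℝ) : ℂ) = 0 := by
      push_cast
      rw [Finset.mul_sum]
      rw [← hflux2]
      exact Finset.sum_congr rfl fun j _ => (hdiag j).symm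
    have h2 : ((∑ j ∈ S, t j : ℝ) : ℂ) = 0 := by
      have : (2 * Complex.I) ≠ 0 := by simp [Complex.I_ne_zero]
      exact (mul_eq_zero.mp h1).resolve_left this
    exact_mod_cast h2
  have htnn : ∀ j ∈ S, 0 ≤ t j := by
    intro j _
    simp only [ht]
    split
    · exact mul_nonneg (Real.sqrt_nonneg _)
        (mul_nonneg (Complex.normSq_nonneg _) (Complex.normSq_nonneg _))
    · exact le_refl 0
  intro j hj hlt
  have htj : t j = 0 := (Finset.sum_eq_zero_iff_of_nonneg htnn).mp hsum0 j hj
  simp only [ht, if_pos hlt] at htj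
  have hm : 0 < Real.sqrt (k^2 - (lam j)^2) := Real.sqrt_pos.mpr (by linarith)
  have hE : 0 < Complex.normSq (Complex.exp (Complex.I * μ j * y₀)) :=
    Complex.normSq_pos.mpr (Complex.exp_ne_zero _)
  have hc : Complex.normSq (c j) = 0 := by
    rcases mul_eq_zero.mp htj with h | h
    · exact absurd h hm.ne'
    · rcases mul_eq_zero.mp h with h' | h'
      · exact h'
      · exact absurd h' hE.ne'
  exact Complex.normSq_eq_zero.mp hc
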